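/- Let d ≥ 1, let Σ be a d×d complex Hermitian positive definite matrix with positive definite square root Σ^{1/2}, and let X be a d×d complex Hermitian positive definite matrix such that (Σ^{1/2} R Σ^{-1/2}) X (Σ^{1/2} R Σ^{-1/2})* = X for every R ∈ SU(d), where * denotes conjugate transpose. Then there exists a real number c > 0 such that X = c • Σ. -/

import Mathlib

open Matrix
open scoped ComplexOrder

open scoped Classical in
/-- The positive semidefinite square root of a complex matrix, extended to a total function
(junk value `0` when the matrix is not positive semidefinite). -/
noncomputable def matSqrt {d : ℕ} (A : Matrix (Fin d) (Fin d) ℂ) : Matrix (Fin d) (Fin d) ℂ :=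
  if hA : A.PosSemidef then
    (hA.1.eigenvectorUnitary : Matrix (Fin d) (Fin d) ℂ) *
      diagonal ((↑) ∘ (fun x : ℝ => Real.sqrt x) ∘ hA.1.eigenvalues) *
      (star hA.1.eigenvectorUnitary : Matrix (Fin d) (Fin d) ℂ)
  else 0

lemma posdef_conj_aux {n : Type*} [Fintype n] [DecidableEq n]
    {A B : Matrix n n ℂ} (hA : A.PosDef) (hB : IsUnit B.det) :
    (B * A * Bᴴ).PosDef := by
  refine PosDef.of_dotProduct_mulVec_pos (isHermitian_mul_mul_conjTranspose B hA.1) (fun x hx => ?_)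
  have hBH : IsUnit (Bᴴ).det := by
    rw [det_conjTranspose]; exact hB.star
  have hxB : Bᴴ *ᵥ x ≠ 0 := by
    intro h
    apply hx
    have := congrArg (fun w => (Bᴴ)⁻¹ *ᵥ w) h
    simpa [mulVec_mulVec, nonsing_inv_mul _ hBH] using this
  simpa only [star_mulVec, conjTranspose_conjTranspose, dotProduct_mulVec, vecMul_vecMul,
    Matrix.mul_assoc] using hA.dotProduct_mulVec_pos hxB

/-- if a complex Hermitian positive definite `d × d` matrix `X` is fixed by
the action `G · X = G X Gᴴ` of every element `G = Σ^{1/2} R Σ^{-1/2}` of `H_Σ`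
(`R ∈ SU(d)`), then `X = c • Σ` for some real `c > 0`. -/
theorem fixed_by_H_sigma_implies_multiple_complex (d : ℕ) (hd : 1 ≤ d)
    (S X : Matrix (Fin d) (Fin d) ℂ) (hS : S.PosDef) (hX : X.PosDef)
    (hfix : ∀ R : Matrix (Fin d) (Fin d) ℂ, R * Rᴴ = 1 → R.det = 1 →
      (matSqrt S * R * (matSqrt S)⁻¹) * X * (matSqrt S * R * (matSqrt S)⁻¹)ᴴ = X) :
    ∃ c : ℝ, 0 < c ∧ X = (c : ℂ) • S := by
  set Q := matSqrt S with hQdef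
  have hQeq : Q = (hS.posSemidef.1.eigenvectorUnitary : Matrix (Fin d) (Fin d) ℂ) *
      diagonal ((↑) ∘ (fun x : ℝ => Real.sqrt x) ∘ hS.posSemidef.1.eigenvalues) *
      (star hS.posSemidef.1.eigenvectorUnitary : Matrix (Fin d) (Fin d) ℂ) := by
    rw [hQdef, matSqrt, dif_pos hS.posSemidef]
  have hQps : Q.PosSemidef := by
    rw [hQeq, star_eq_conjTranspose]
    refine PosSemidef.mul_mul_conjTranspose_same (posSemidef_diagonal_iff.mpr fun i => ?_) _
    exact Complex.zero_le_real.mpr (Real.sqrt_nonneg _)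
  have hQ2 : Q * Q = S := by
    rw [hQeq]
    have hU : (star hS.posSemidef.1.eigenvectorUnitary : Matrix (Fin d) (Fin d) ℂ) *
        (hS.posSemidef.1.eigenvectorUnitary : Matrix (Fin d) (Fin d) ℂ) = 1 :=
      Unitary.coe_star_mul_self _
    have hDD : (diagonal ((↑) ∘ (fun x : ℝ => Real.sqrt x) ∘ hS.posSemidef.1.eigenvalues) :
        Matrix (Fin d) (Fin d) ℂ) *
        diagonal ((↑) ∘ (fun x : ℝ => Real.sqrt x) ∘ hS.posSemidef.1.eigenvalues) =
        diagonal (RCLike.ofReal ∘ hS.posSemidef.1.eigenvalues) := by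
      rw [diagonal_mul_diagonal]; congr 1; funext i
      simp only [Function.comp_apply]
      rw [← Complex.ofReal_mul, Real.mul_self_sqrt (hS.posSemidef.eigenvalues_nonneg i)]; rfl
    conv_rhs => rw [hS.posSemidef.1.spectral_theorem, Unitary.conjStarAlgAut_apply, ← hDD]
    simp only [Matrix.mul_assoc]
    rw [← Matrix.mul_assoc _ _ (diagonal _ * _), hU, Matrix.one_mul]
  have hQH : Qᴴ = Q := hQps.isHermitian
  have hdet : IsUnit Q.det := by
    have h1 : Q.det * Q.det = S.det := by rw [← det_mul, hQ2]
    have h2 : S.det ≠ 0 := hS.det_pos.ne'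
    rw [isUnit_iff_ne_zero]
    intro h; apply h2; rw [← h1, h, mul_zero]
  have hQinvH : Q⁻¹ᴴ = Q⁻¹ := by rw [conjTranspose_nonsing_inv, hQH]
  set Y := Q⁻¹ * X * Q⁻¹ with hYdef
  -- recover X from Y
  have hXY : Q * Y * Q = X := by
    simp only [hYdef, Matrix.mul_assoc]
    rw [nonsing_inv_mul _ hdet, mul_one, mul_nonsing_inv_cancel_left _ _ hdet]
  -- Y commutes with every special unitary
  have hcomm : ∀ R : Matrix (Fin d) (Fin d) ℂ, R * Rᴴ = 1 → R.det = 1 →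
      R * Y = Y * R := by
    intro R h1 h2
    have h := hfix R h1 h2
    have e1 : (Q * R * Q⁻¹)ᴴ = Q⁻¹ * (Rᴴ * Q) := by
      rw [conjTranspose_mul, conjTranspose_mul, hQH, hQinvH]
    rw [e1] at h
    have h4 := congrArg (fun M => Q⁻¹ * M * Q⁻¹) h
    simp only [Matrix.mul_assoc] at h4
    rw [mul_nonsing_inv _ hdet, mul_one, nonsing_inv_mul_cancel_left _ _ hdet] at h4
    -- h4 : R * (Q⁻¹ * (X * (Q⁻¹ * Rᴴ))) = Q⁻¹ * (X * Q⁻¹)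
    have h3 : R * Y * Rᴴ = Y := by
      simp only [hYdef, Matrix.mul_assoc]
      exact h4
    have h5 : Rᴴ * R = 1 := mul_eq_one_comm.mp h1
    calc R * Y = R * Y * (Rᴴ * R) := by rw [h5, mul_one]
      _ = (R * Y * Rᴴ) * R := by simp only [Matrix.mul_assoc]
      _ = Y * R := by rw [h3]
  -- off-diagonal entries of Y vanish
  have hoff : ∀ i j : Fin d, i ≠ j → Y i j = 0 := by
    intro i j hij
    set f : Fin d → ℂ := fun k => if k = i then Complex.I else if k = j then -Complex.I else 1
      with hf
    have hfu : ∀ k, f k * star (f k) = 1 := by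
      intro k
      simp only [hf]
      by_cases h : k = i
      · rw [if_pos h]
        simp [Complex.star_def, Complex.conj_I, Complex.I_mul_I]
      · rw [if_neg h]
        by_cases h' : k = j
        · rw [if_pos h']
          simp [Complex.star_def, Complex.conj_I, Complex.I_mul_I]
        · rw [if_neg h']
          simp
    have hDu : diagonal f * (diagonal f)ᴴ = 1 := by
      rw [diagonal_conjTranspose, diagonal_mul_diagonal]
      have : (fun k => f k * (star f) k) = fun _ => (1 : ℂ) := by
        funext k; exact hfu k
      rw [this, diagonal_one]
    have hDdet : (diagonal f).det = 1 := by
      rw [det_diagonal]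
      have hsplit : ∀ k, f k =
          (if k = i then Complex.I else 1) * (if k = j then -Complex.I else 1) := by
        intro k
        simp only [hf]
        by_cases h : k = i
        · subst h
          rw [if_neg hij]
          simp
        · by_cases h' : k = j
          · subst h'
            simp [h]
          · simp [h, h']
      rw [Finset.prod_congr rfl (fun k _ => hsplit k), Finset.prod_mul_distrib,
        Finset.prod_ite_eq' Finset.univ i (fun _ => Complex.I),
        Finset.prod_ite_eq' Finset.univ j (fun _ => -Complex.I)]
      simp [Complex.I_mul_I]
    have hc := hcomm (diagonal f) hDu hDdet
    have he := congrFun (congrFun hc i) j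
    simp only [diagonal_mul, mul_diagonal] at he
    have hfi : f i = Complex.I := by simp [hf]
    have hfj : f j = -Complex.I := by simp [hf, hij.symm]
    rw [hfi, hfj] at he
    -- he : Complex.I * Y i j = Y i j * -Complex.I
    have : (2 * Complex.I) * Y i j = 0 := by ring_nf; linear_combination he
    have h2I : (2 * Complex.I) ≠ 0 := by simp [Complex.I_ne_zero]
    exact (mul_eq_zero.mp this).resolve_left h2I
  -- diagonal entries of Y agree
  have hdiag : ∀ i j : Fin d, i ≠ j → Y i i = Y j j := by
    intro i j hij
    set σ := Equiv.swap i j with hσ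
    set g : Fin d → ℂ := fun k => if k = i then -1 else 1 with hg
    set P := diagonal g * σ.permMatrix ℂ with hP
    have hPapp : ∀ a b, P a b = if σ a = b then g a else 0 := by
      intro a b
      simp [hP, diagonal_mul, Equiv.Perm.permMatrix, PEquiv.toMatrix_apply,
        Equiv.toPEquiv_apply, mul_ite, mul_one, mul_zero, eq_comm]
    have hgsq : ∀ a, g a * (starRingEnd ℂ) (g a) = 1 := by
      intro a; by_cases h : a = i <;> simp [hg, h]
    have hPu : P * Pᴴ = 1 := by
      ext a b
      simp only [mul_apply, conjTranspose_apply, hPapp, one_apply]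
      rw [Finset.sum_eq_single (σ a)]
      · by_cases hab : a = b
        · subst hab
          simp [hgsq a]
        · have h1 : ¬ (σ b = σ a) := fun h => hab (σ.injective h).symm
          simp [h1, hab]
      · intro k _ hk
        rw [if_neg (fun h => hk h.symm), zero_mul]
      · simp
    have hPdet : P.det = 1 := by
      rw [hP, det_mul, det_diagonal, det_permutation]
      have : ∀ k, g k = if k = i then (-1 : ℂ) else 1 := fun k => rfl
      rw [Finset.prod_congr rfl (fun k _ => this k),
        Finset.prod_ite_eq' Finset.univ i (fun _ => (-1 : ℂ))]
      simp [hσ, Equiv.Perm.sign_swap hij]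
    have hc := hcomm P hPu hPdet
    have he := congrFun (congrFun hc i) j
    simp only [mul_apply] at he
    have hL : ∑ k, P i k * Y k j = g i * Y (σ i) j := by
      rw [Finset.sum_congr rfl (fun k _ => by rw [hPapp i k])]
      rw [Finset.sum_eq_single (σ i)]
      · simp
      · intro k _ hk
        rw [if_neg (fun h => hk h.symm), zero_mul]
      · simp
    have hR : ∑ k, Y i k * P k j = Y i (σ j) * g (σ j) := by
      rw [Finset.sum_congr rfl (fun k _ => by rw [hPapp k j])]
      rw [Finset.sum_eq_single (σ j)]
      · have hσσ : σ (σ j) = j := by rw [hσ, Equiv.swap_apply_self]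
        rw [if_pos hσσ]
      · intro k _ hk
        have hσk : ¬ (σ k = j) := by
          intro h
          apply hk
          rw [← h, hσ, Equiv.swap_apply_self]
        rw [if_neg hσk, mul_zero]
      · simp
    rw [hL, hR] at he
    have hσi : σ i = j := Equiv.swap_apply_left i j
    have hσj : σ j = i := Equiv.swap_apply_right i j
    rw [hσi, hσj] at he
    have hgi : g i = -1 := by simp [hg]
    rw [hgi] at he
    -- he : -1 * Y j j = Y i i * -1
    linear_combination he
  -- conclude Y is a scalar matrix
  set i₀ : Fin d := ⟨0, hd⟩ with hi₀
  set c : ℂ := Y i₀ i₀ with hc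
  have hYc : Y = c • (1 : Matrix (Fin d) (Fin d) ℂ) := by
    ext a b
    by_cases hab : a = b
    · subst hab
      by_cases ha : a = i₀
      · subst ha; simp [hc]
      · simp [one_apply, hdiag a i₀ ha, hc]
    · simp [one_apply, hab, hoff a b hab]
  -- positivity of c
  have hYpd : Y.PosDef := by
    have : Y = Q⁻¹ * X * (Q⁻¹)ᴴ := by rw [hQinvH]
    rw [this]
    exact posdef_conj_aux hX ((isUnit_nonsing_inv_det_iff).mpr hdet)
  have hcpos : 0 < c := by
    have hv : (Pi.single i₀ (1 : ℂ) : Fin d → ℂ) ≠ 0 := by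
      intro h
      have := congrFun h i₀
      simp at this
    have := hYpd.dotProduct_mulVec_pos hv
    simpa [dotProduct, mulVec, Pi.single_apply, Finset.sum_ite_eq, hc] using this
  rw [Complex.lt_def] at hcpos
  refine ⟨c.re, by simpa using hcpos.1, ?_⟩
  have hcre : (c.re : ℂ) = c := by
    apply Complex.ext <;> simp [← hcpos.2]
  rw [← hXY, hYc, hcre]
  rw [Matrix.mul_smul, Matrix.smul_mul, mul_one, hQ2]
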